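/- The ℓ₁ reconstruction loss corresponds to a Laplace model: for Laplace measures of equal scale, the Kullback–Leibler divergence is an increasing function of the absolute distance between the location parameters. Precisely, for all μ₁, μ₂ ∈ ℝ and b > 0, KL( Laplace(μ₁, b) ‖ Laplace(μ₂, b) ) = |μ₁ − μ₂|/b + exp(−|μ₁ − μ₂|/b) − 1. In particular, minimizing the KL divergence over μ₂ is equivalent to minimizing the absolute error |μ₁ − μ₂|. -/

import Mathlib

open MeasureTheory

/-- Kullback–Leibler divergence `KL(P ‖ R) = ∫ log (dP/dR) dP`
(for `P` absolutely continuous with respect to `R`). -/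
noncomputable def klReal {Ω : Type*} [MeasurableSpace Ω] (P R : Measure Ω) : ℝ :=
  ∫ x, Real.log ((P.rnDeriv R x).toReal) ∂P

/-- The Laplace measure on `ℝ` with location `μ` and scale `b`, with density
`x ↦ (1/(2b)) exp(-|x-μ|/b)` with respect to Lebesgue measure. -/
noncomputable def laplaceReal (μ b : ℝ) : Measure ℝ :=
  volume.withDensity fun x => ENNReal.ofReal ((1 / (2 * b)) * Real.exp (-|x - μ| / b))

section Aux
open Real Set Filter Topology ENNReal NNReal


lemma tend0 (a : ℝ) : Tendsto (fun x => -(a + x) * Real.exp (-x)) atTop (𝓝 0) := by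
  have t1 := Real.tendsto_exp_neg_atTop_nhds_zero
  have t2 := Real.tendsto_pow_mul_exp_neg_atTop_nhds_zero 1
  have := (t1.const_mul (-a)).add (t2.neg)
  simp only [mul_zero, neg_zero, add_zero, zero_add] at this
  refine this.congr (fun x => ?_)
  simp only [pow_one]
  ring

lemma piece1 (c : ℝ) (hc : 0 ≤ c) :
    IntegrableOn (fun x => (c + x) * Real.exp (-x)) (Ioi 0) ∧
    ∫ x in Ioi (0:ℝ), (c + x) * Real.exp (-x) = c + 1 := by
  have hderiv : ∀ x ∈ Ici (0:ℝ), HasDerivAt (fun x => -(c + 1 + x) * Real.exp (-x))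
      ((c + x) * Real.exp (-x)) x := by
    intro x _
    have h1 : HasDerivAt (fun x : ℝ => -(c + 1 + x)) (-1) x := ((hasDerivAt_id x).const_add (c + 1)).neg
    have h2 : HasDerivAt (fun x : ℝ => Real.exp (-x)) (Real.exp (-x) * (-1)) x :=
      (hasDerivAt_neg x).exp
    have := h1.mul h2
    exact this.congr_deriv (by ring)
  have hnonneg : ∀ x ∈ Ioi (0:ℝ), 0 ≤ (c + x) * Real.exp (-x) := fun x hx =>
    mul_nonneg (by have := mem_Ioi.mp hx; linarith) (Real.exp_nonneg _)
  have htend : Tendsto (fun x => -(c + 1 + x) * Real.exp (-x)) atTop (𝓝 0) := by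
    refine (tend0 (c + 1)).congr (fun x => by ring_nf)
  constructor
  · exact integrableOn_Ioi_deriv_of_nonneg' hderiv hnonneg htend
  · rw [integral_Ioi_of_hasDerivAt_of_nonneg' hderiv hnonneg htend]
    simp

lemma piece2 (c : ℝ) :
    IntegrableOn (fun x => (x - c) * Real.exp (-x)) (Ioi c) ∧
    ∫ x in Ioi c, (x - c) * Real.exp (-x) = Real.exp (-c) := by
  have hderiv : ∀ x ∈ Ici c, HasDerivAt (fun x => -(x - c + 1) * Real.exp (-x))
      ((x - c) * Real.exp (-x)) x := by
    intro x _
    have h1 : HasDerivAt (fun x : ℝ => -(x - c + 1)) (-1) x :=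
      (((hasDerivAt_id x).sub_const c).add_const 1).neg
    have h2 : HasDerivAt (fun x : ℝ => Real.exp (-x)) (Real.exp (-x) * (-1)) x :=
      (hasDerivAt_neg x).exp
    have := h1.mul h2
    exact this.congr_deriv (by ring)
  have hnonneg : ∀ x ∈ Ioi c, 0 ≤ (x - c) * Real.exp (-x) := fun x hx =>
    mul_nonneg (by have := mem_Ioi.mp hx; linarith) (Real.exp_nonneg _)
  have htend : Tendsto (fun x => -(x - c + 1) * Real.exp (-x)) atTop (𝓝 0) := by
    refine (tend0 (1 - c)).congr (fun x => by ring_nf)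
  constructor
  · exact integrableOn_Ioi_deriv_of_nonneg' hderiv hnonneg htend
  · rw [integral_Ioi_of_hasDerivAt_of_nonneg' hderiv hnonneg htend]
    simp

lemma piece3 (c : ℝ) :
    ∫ x in (0:ℝ)..c, (c - x) * Real.exp (-x) = Real.exp (-c) + c - 1 := by
  have hderiv : ∀ x ∈ uIcc (0:ℝ) c, HasDerivAt (fun x => (x - c + 1) * Real.exp (-x))
      ((c - x) * Real.exp (-x)) x := by
    intro x _
    have h1 : HasDerivAt (fun x : ℝ => x - c + 1) 1 x :=
      ((hasDerivAt_id x).sub_const c).add_const 1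
    have h2 : HasDerivAt (fun x : ℝ => Real.exp (-x)) (Real.exp (-x) * (-1)) x :=
      (hasDerivAt_neg x).exp
    have := h1.mul h2
    exact this.congr_deriv (by ring)
  have hint : IntervalIntegrable (fun x => (c - x) * Real.exp (-x)) volume 0 c :=
    (Continuous.mul (by continuity) (by continuity)).intervalIntegrable 0 c
  rw [intervalIntegral.integral_eq_sub_of_hasDerivAt hderiv hint]
  simp
  ring

lemma integrableOn_Iic_of_neg {f : ℝ → ℝ} (h : IntegrableOn (fun x => f (-x)) (Ioi 0)) :
    IntegrableOn f (Iic (0:ℝ)) := by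
  have A : MeasurableEmbedding (fun x : ℝ => -x) :=
    (Homeomorph.neg ℝ).isClosedEmbedding.measurableEmbedding
  have hres : volume.restrict (Iic (0:ℝ))
      = (volume.restrict (Ici (0:ℝ))).map (fun x : ℝ => -x) := by
    have hpre : (fun x : ℝ => -x) ⁻¹' Iic 0 = Ici (0:ℝ) := by ext x; simp
    conv_lhs => rw [← Measure.map_neg_eq_self (volume : Measure ℝ)]
    rw [A.restrict_map, hpre]
  rw [IntegrableOn, hres, A.integrable_map_iff]
  exact (integrableOn_Ici_iff_integrableOn_Ioi).mpr h

lemma base (c : ℝ) (hc : 0 ≤ c) :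
    Integrable (fun x => |x - c| * Real.exp (-|x|)) ∧
    ∫ x, |x - c| * Real.exp (-|x|) = 2*c + 2*Real.exp (-c) := by
  set f : ℝ → ℝ := fun x => |x - c| * Real.exp (-|x|) with hf
  have heq1 : EqOn (fun x => (c + x) * Real.exp (-x)) (fun x => f (-x)) (Ioi 0) := by
    intro x hx
    have hx0 : 0 < x := hx
    simp only [hf]
    rw [abs_neg, abs_of_nonneg hx0.le, abs_of_nonpos (by linarith : -x - c ≤ 0)]
    ring_nf
  have hIic : IntegrableOn f (Iic (0:ℝ)) :=
    integrableOn_Iic_of_neg (((piece1 c hc).1).congr_fun heq1 measurableSet_Ioi)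
  have hIicInt : ∫ x in Iic (0:ℝ), f x = c + 1 := by
    have h0 := integral_comp_neg_Ioi (0:ℝ) f
    rw [neg_zero] at h0
    rw [← h0, ← setIntegral_congr_fun measurableSet_Ioi heq1]
    exact (piece1 c hc).2
  have heq2 : EqOn (fun x => (c - x) * Real.exp (-x)) f (Ioc 0 c) := by
    intro x hx
    simp only [hf]
    rw [abs_of_nonpos (by linarith [hx.2] : x - c ≤ 0), abs_of_nonneg hx.1.le]
    ring_nf
  have heq3 : EqOn (fun x => (x - c) * Real.exp (-x)) f (Ioi c) := by
    intro x hx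
    have hx0 : c < x := hx
    simp only [hf]
    rw [abs_of_nonneg (by linarith : (0:ℝ) ≤ x - c), abs_of_nonneg (by linarith : (0:ℝ) ≤ x)]
  have hIoc : IntegrableOn f (Ioc 0 c) := by
    refine (Continuous.integrableOn_Ioc ?_)
    exact (continuous_abs.comp (continuous_id.sub continuous_const)).mul
      ((continuous_abs.neg).rexp)
  have hIoiC : IntegrableOn f (Ioi c) := ((piece2 c).1).congr_fun heq3 measurableSet_Ioi
  have hIoi : IntegrableOn f (Ioi (0:ℝ)) := by
    rw [← Ioc_union_Ioi_eq_Ioi hc]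
    exact hIoc.union hIoiC
  have hIoiInt : ∫ x in Ioi (0:ℝ), f x = (Real.exp (-c) + c - 1) + Real.exp (-c) := by
    rw [← Ioc_union_Ioi_eq_Ioi hc,
      setIntegral_union (Ioc_disjoint_Ioi le_rfl) measurableSet_Ioi hIoc hIoiC]
    congr 1
    · rw [← setIntegral_congr_fun measurableSet_Ioc heq2, ← intervalIntegral.integral_of_le hc]
      exact piece3 c
    · rw [← setIntegral_congr_fun measurableSet_Ioi heq3]
      exact (piece2 c).2
  constructor
  · rw [← integrableOn_univ, ← Iic_union_Ioi (a := (0:ℝ))]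
    exact hIic.union hIoi
  · rw [← intervalIntegral.integral_Iic_add_Ioi hIic hIoi, hIicInt, hIoiInt]
    ring

lemma base' (c : ℝ) :
    Integrable (fun x => |x - c| * Real.exp (-|x|)) ∧
    ∫ x, |x - c| * Real.exp (-|x|) = 2*|c| + 2*Real.exp (-|c|) := by
  rcases le_or_gt 0 c with hc | hc
  · rw [abs_of_nonneg hc]
    exact base c hc
  · have h := base (-c) (by linarith)
    have habs : ∀ x : ℝ, |(-x) - (-c)| = |x - c| := by
      intro x
      rw [← abs_neg]
      congr 1
      ring
    have hcomp : (fun x : ℝ => |x - c| * Real.exp (-|x|))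
        = (fun x => |x - (-c)| * Real.exp (-|x|)) ∘ (fun x : ℝ => -x) := by
      funext x
      simp only [Function.comp_apply, abs_neg, habs x]
    constructor
    · rw [hcomp]
      exact h.1.comp_neg
    · rw [abs_of_neg hc]
      have hn := integral_neg_eq_self (fun y => |y - (-c)| * Real.exp (-|y|)) (volume : Measure ℝ)
      simp only [abs_neg, habs] at hn
      rw [hn, h.2]

lemma gen (b : ℝ) (hb : 0 < b) (c : ℝ) :
    Integrable (fun x => |x - c| * Real.exp (-|x| / b)) ∧
    ∫ x, |x - c| * Real.exp (-|x| / b) = 2*b*|c| + 2*b^2*Real.exp (-|c| / b) := by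
  set g : ℝ → ℝ := fun x => |x - c| * Real.exp (-|x| / b) with hg
  have hcomp : (fun x => g (b * x)) = fun x => b * (|x - c/b| * Real.exp (-|x|)) := by
    funext x
    have h1 : |b*x - c| = b * |x - c/b| := by
      have hbb : b*x - c = b * (x - c/b) := by field_simp
      rw [hbb, abs_mul, abs_of_pos hb]
    have h2 : -|b*x| / b = -|x| := by
      rw [abs_mul, abs_of_pos hb, neg_div]
      congr 1
      rw [mul_comm, mul_div_assoc, div_self hb.ne', mul_one]
    simp only [hg]
    rw [h1, h2]
    ring
  have hb' := (base' (c/b))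
  have hg' : Integrable (fun x => b * (|x - c/b| * Real.exp (-|x|))) := hb'.1.const_mul b
  have hint : Integrable g := (integrable_comp_mul_left_iff g hb.ne').mp (hcomp ▸ hg')
  have hI := Measure.integral_comp_mul_left g b
  rw [hcomp, integral_const_mul, hb'.2] at hI
  have hcb : |c / b| = |c| / b := by rw [abs_div, abs_of_pos hb]
  rw [hcb, abs_of_pos (by positivity : (0:ℝ) < b⁻¹), smul_eq_mul] at hI
  refine ⟨hint, ?_⟩
  have h4 : (∫ x, g x) = b * (b * (2 * (|c|/b) + 2 * Real.exp (-(|c|/b)))) := by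
    rw [hI]
    field_simp
  rw [h4, neg_div]
  field_simp

lemma kl_eq (μ₁ ν b : ℝ) (hb : 0 < b) :
    klReal (laplaceReal μ₁ b) (laplaceReal ν b)
      = |μ₁ - ν| / b + Real.exp (-|μ₁ - ν| / b) - 1 := by
  have hb2 : (2:ℝ) * b ≠ 0 := by positivity
  set f₁ : ℝ → ℝ := fun x => (1 / (2 * b)) * Real.exp (-|x - μ₁| / b) with hf₁
  set f₂ : ℝ → ℝ := fun x => (1 / (2 * b)) * Real.exp (-|x - ν| / b) with hf₂
  have hc1 : Continuous f₁ := by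
    apply Continuous.mul continuous_const
    exact Real.continuous_exp.comp (((continuous_abs.comp
      (continuous_id.sub continuous_const)).neg).div_const b)
  have hc2 : Continuous f₂ := by
    apply Continuous.mul continuous_const
    exact Real.continuous_exp.comp (((continuous_abs.comp
      (continuous_id.sub continuous_const)).neg).div_const b)
  set D : ℝ → ℝ≥0∞ := fun x => ENNReal.ofReal (Real.exp ((|x - ν| - |x - μ₁|) / b)) with hDdef
  have hD : Measurable D := by
    apply Measurable.ennreal_ofReal
    apply Continuous.measurable
    exact Real.continuous_exp.comp (((continuous_abs.comp
      (continuous_id.sub continuous_const)).sub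
        (continuous_abs.comp (continuous_id.sub continuous_const))).div_const b)
  have hf2m : Measurable fun x => ENNReal.ofReal (f₂ x) := hc2.measurable.ennreal_ofReal
  have hmul : ∀ x, ENNReal.ofReal (f₂ x) * D x = ENNReal.ofReal (f₁ x) := by
    intro x
    rw [hDdef, ← ENNReal.ofReal_mul (by positivity : (0:ℝ) ≤ f₂ x)]
    congr 1
    rw [hf₂, hf₁]
    simp only
    rw [mul_assoc, ← Real.exp_add]
    congr 2
    ring
  have hP : laplaceReal μ₁ b = (laplaceReal ν b).withDensity D := by
    rw [laplaceReal, laplaceReal, ← withDensity_mul _ hf2m hD]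
    congr 1
    funext x
    exact (hmul x).symm
  haveI hsf : SigmaFinite (laplaceReal ν b) := by
    unfold laplaceReal
    infer_instance
  have hRN : (laplaceReal μ₁ b).rnDeriv (laplaceReal ν b) =ᵐ[laplaceReal ν b] D := by
    rw [hP]
    exact Measure.rnDeriv_withDensity _ hD
  have hac : laplaceReal μ₁ b ≪ laplaceReal ν b := by
    rw [hP]
    exact withDensity_absolutelyContinuous _ _
  have hRNP : (laplaceReal μ₁ b).rnDeriv (laplaceReal ν b) =ᵐ[laplaceReal μ₁ b] D :=
    hac.ae_eq hRN
  have step1 : klReal (laplaceReal μ₁ b) (laplaceReal ν b)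
      = ∫ x, (|x - ν| - |x - μ₁|) / b ∂(laplaceReal μ₁ b) := by
    rw [klReal]
    refine integral_congr_ae (hRNP.mono fun x hx => ?_)
    show Real.log (((laplaceReal μ₁ b).rnDeriv (laplaceReal ν b)) x).toReal
      = (|x - ν| - |x - μ₁|) / b
    rw [hx]
    simp only [hDdef]
    rw [ENNReal.toReal_ofReal (Real.exp_nonneg _), Real.log_exp]
  have hmeas : Measurable fun x => Real.toNNReal (f₁ x) := hc1.measurable.real_toNNReal
  have hwd : laplaceReal μ₁ b = volume.withDensity fun x => ((Real.toNNReal (f₁ x) : ℝ≥0) : ℝ≥0∞) :=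
    rfl
  have step2 : klReal (laplaceReal μ₁ b) (laplaceReal ν b)
      = ∫ x, f₁ x * ((|x - ν| - |x - μ₁|) / b) := by
    rw [step1, hwd, integral_withDensity_eq_integral_smul hmeas]
    refine integral_congr_ae (Filter.Eventually.of_forall fun x => ?_)
    simp only [NNReal.smul_def]
    rw [Real.coe_toNNReal _ (by positivity : (0:ℝ) ≤ f₁ x), smul_eq_mul]
  set h₂ : ℝ → ℝ := fun x => |x - ν| * Real.exp (-|x - μ₁| / b) with hh₂
  set h₁ : ℝ → ℝ := fun x => |x - μ₁| * Real.exp (-|x - μ₁| / b) with hh₁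
  have e2 : (fun t => |t - (ν - μ₁)| * Real.exp (-|t| / b)) ∘ (fun t => t - μ₁) = h₂ := by
    funext t
    simp only [Function.comp_apply, hh₂]
    rw [show t - μ₁ - (ν - μ₁) = t - ν by ring]
  have e1 : (fun t => |t - 0| * Real.exp (-|t| / b)) ∘ (fun t => t - μ₁) = h₁ := by
    funext t
    simp only [Function.comp_apply, hh₁, sub_zero]
  have hint2 : Integrable h₂ := by
    rw [← e2]
    exact ((gen b hb (ν - μ₁)).1).comp_sub_right μ₁
  have hint1 : Integrable h₁ := by
    rw [← e1]
    exact ((gen b hb 0).1).comp_sub_right μ₁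
  have hI2 : ∫ x, h₂ x = 2*b*|ν - μ₁| + 2*b^2*Real.exp (-|ν - μ₁| / b) := by
    rw [← e2]
    rw [show ((fun t => |t - (ν - μ₁)| * Real.exp (-|t| / b)) ∘ (fun t => t - μ₁))
        = fun t => (fun y => |y - (ν - μ₁)| * Real.exp (-|y| / b)) (t - μ₁) from rfl]
    rw [integral_sub_right_eq_self (fun y => |y - (ν - μ₁)| * Real.exp (-|y| / b)) μ₁]
    exact (gen b hb (ν - μ₁)).2
  have hI1 : ∫ x, h₁ x = 2*b^2 := by
    rw [← e1]
    rw [show ((fun t => |t - 0| * Real.exp (-|t| / b)) ∘ (fun t => t - μ₁))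
        = fun t => (fun y => |y - 0| * Real.exp (-|y| / b)) (t - μ₁) from rfl]
    rw [integral_sub_right_eq_self (fun y => |y - 0| * Real.exp (-|y| / b)) μ₁]
    rw [(gen b hb 0).2]
    simp
  have step3 : (fun x => f₁ x * ((|x - ν| - |x - μ₁|) / b))
      = fun x => (1/(2*b^2)) * (h₂ x - h₁ x) := by
    funext x
    rw [hf₁, hh₂, hh₁]
    simp only
    field_simp
  rw [step2, step3, integral_const_mul, integral_sub hint2 hint1, hI2, hI1,
    abs_sub_comm ν μ₁]
  field_simp

lemma kl_mono (b : ℝ) (hb : 0 < b) :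
    StrictMonoOn (fun t : ℝ => t / b + Real.exp (-t / b) - 1) (Set.Ici 0) := by
  intro s hs t ht hst
  simp only
  have hd : (0:ℝ) < (t - s) / b := by
    apply div_pos (by linarith) hb
  have h1 : 1 - (t - s)/b < Real.exp (-((t - s)/b)) := by
    have := Real.add_one_lt_exp (x := -((t - s)/b)) (by linarith)
    linarith
  have h2 : Real.exp (-s/b) ≤ 1 := Real.exp_le_one_iff.mpr (by
    apply div_nonpos_of_nonpos_of_nonneg (by simpa using hs.out) hb.le)
  have h3 : Real.exp (-t/b) = Real.exp (-s/b) * Real.exp (-((t - s)/b)) := by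
    rw [← Real.exp_add]
    congr 1
    field_simp
    ring
  have h4 : (0:ℝ) < Real.exp (-s/b) := Real.exp_pos _
  have h5 : Real.exp (-((t - s)/b)) ≤ 1 := Real.exp_le_one_iff.mpr (by linarith)
  rw [h3]
  have key : Real.exp (-s/b) * (1 - Real.exp (-((t - s)/b))) < (t - s)/b := by
    calc Real.exp (-s/b) * (1 - Real.exp (-((t - s)/b)))
        ≤ 1 * (1 - Real.exp (-((t - s)/b))) := by nlinarith
      _ < (t - s)/b := by nlinarith
  have : (t - s)/b = t/b - s/b := by ring
  nlinarith

end Aux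

/-- For Laplace measures of equal scale `b > 0`, the Kullback–Leibler divergence is an increasing
function of the absolute distance between the locations:
`KL(Laplace(μ₁,b) ‖ Laplace(μ₂,b)) = |μ₁-μ₂|/b + exp(-|μ₁-μ₂|/b) - 1`. In particular, minimizing
the KL divergence over the second location is equivalent to minimizing the absolute error. -/
theorem laplace_kl_eq_function_of_absolute_distance (μ₁ μ₂ b : ℝ) (hb : 0 < b) :
    klReal (laplaceReal μ₁ b) (laplaceReal μ₂ b)
      = |μ₁ - μ₂| / b + Real.exp (-|μ₁ - μ₂| / b) - 1 ∧
    ∀ ν ν' : ℝ,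
      (klReal (laplaceReal μ₁ b) (laplaceReal ν b) ≤ klReal (laplaceReal μ₁ b) (laplaceReal ν' b) ↔
      |μ₁ - ν| ≤ |μ₁ - ν'|) := by
  refine ⟨kl_eq μ₁ μ₂ b hb, fun ν ν' => ?_⟩
  rw [kl_eq μ₁ ν b hb, kl_eq μ₁ ν' b hb]
  exact (kl_mono b hb).le_iff_le (Set.mem_Ici.mpr (abs_nonneg _)) (Set.mem_Ici.mpr (abs_nonneg _))
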